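/- arXiv:1109.6309 — 2 statements merged into one kernel-verified Lean document; each statement's English description precedes it below -/
import Mathlib

section
/- Let A be an alphabet and L a set of nonempty words over A (the left-hand sides of a minimal rewriting system) such that no element of L contains another element of L as a proper factor, and no element of L contains any element of L as a proper factor of itself. Suppose y ∈ A* is irreducible (contains no element of L as a factor), a ∈ A, and the word ya is reducible (contains some element of L as a factor). Then there exists a unique factorization y = w·ũ with w, ũ ∈ A* such that ũa ∈ L. -/
/-- Any element of `L` that is a factor of `y ++ [a]` but not of `y` is a suffix. -/
lemma stmt_5_aux {A : Type*} {u y : List A} {a : A}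
    (h : u <:+: y ++ [a]) (hn : ¬ u <:+: y) : u <:+ y ++ [a] := by
  obtain ⟨s, t, hst⟩ := h
  induction t using List.reverseRecOn with
  | nil => exact ⟨s, by simpa using hst⟩
  | append_singleton t' b _ =>
    exfalso
    apply hn
    have : (s ++ u ++ t') ++ [b] = y ++ [a] := by simpa [List.append_assoc] using hst
    have h2 := List.append_inj' this rfl
    exact ⟨s, t', by simpa [List.append_assoc] using h2.1⟩

/-- For a minimal rewriting system (no left-hand side contains a left-hand side
as a proper factor), if `y` is irreducible but `y ++ [a]` is reducible, then there
is a unique factorization `y = w ++ ũ` with `ũ ++ [a]` a left-hand side. -/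
theorem stmt_5 {A : Type*} (L : Set (List A)) (hne : ∀ l ∈ L, l ≠ [])
    (hmin : ∀ l ∈ L, ∀ u ∈ L, u <:+: l → u = l)
    (y : List A) (hy : ∀ u ∈ L, ¬ u <:+: y) (a : A)
    (hya : ∃ u ∈ L, u <:+: y ++ [a]) :
    ∃! p : List A × List A, p.1 ++ p.2 = y ∧ p.2 ++ [a] ∈ L := by
  obtain ⟨u, huL, hu⟩ := hya
  have hsuf : u <:+ y ++ [a] := stmt_5_aux hu (hy u huL)
  obtain rfl | ⟨u', b, rfl⟩ := u.eq_nil_or_concat'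
  · exact absurd rfl (hne _ huL)
  obtain ⟨s, hs⟩ := hsuf
  have h2 := List.append_inj' (show (s ++ u') ++ [b] = y ++ [a] by simpa [List.append_assoc] using hs) rfl
  obtain ⟨hsy, hba⟩ := h2
  have hba' : a = b := by simpa using hba.symm
  subst hba'
  refine ⟨(s, u'), ⟨hsy, huL⟩, ?_⟩
  rintro ⟨w, v⟩ ⟨hwv, hvL⟩
  -- both `v ++ [a]` and `u' ++ [a]` are suffixes of `y ++ [a]`
  have hv : v ++ [a] <:+ y ++ [a] := ⟨w, by simp [← hwv, List.append_assoc]⟩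
  have hu' : u' ++ [a] <:+ y ++ [a] := ⟨s, by rw [← hsy, List.append_assoc]⟩
  have := List.suffix_or_suffix_of_suffix hv hu'
  have heq : v ++ [a] = u' ++ [a] := by
    rcases this with h | h
    · exact hmin _ huL _ hvL h.isInfix
    · exact (hmin _ hvL _ huL h.isInfix).symm
  have hv' : v = u' := by simpa using heq
  subst hv'
  have : w = s := by
    have := hwv.trans hsy.symm
    exact List.append_cancel_right this
  simp [this]
end

section
/- Let G be a group with finite symmetric generating set A, let C = {y_g : g ∈ G} ⊆ A* be a prefix-closed set of normal forms with y_1 the empty word, and call a directed edge (g, a) of the Cayley graph degenerate if y_g·a = y_{ga} or y_g = y_{ga}·a⁻¹ (as words). Suppose w' = a₁⋯aₙ is a freely reduced word over A such that for each 1 ≤ i ≤ n the edge (a₁⋯a_{i-1}, a_i) is degenerate. Then w' = y_{w'}; that is, w' is itself the normal form of the element it represents, and moreover every prefix of w' is in C. -/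
/-- If every edge along a freely reduced word `w'` is degenerate (with respect to
a set of normal forms `y` with `y 1 = []`), then `w'` is itself the normal form of
the element it represents, and every prefix of `w'` is a normal form. -/
theorem stmt_18 {A : Type*} {G : Type*} [Group G]
    (ev : A → G) (ι : A → A)
    (hι : ∀ a : A, ι (ι a) = a) (hιev : ∀ a : A, ev (ι a) = (ev a)⁻¹)
    (y : G → List A) (hyrep : ∀ g : G, ((y g).map ev).prod = g)
    (hy1 : y 1 = [])
    (w' : List A)
    (hred : ¬ ∃ (x : List A) (a : A) (z : List A), w' = x ++ a :: ι a :: z)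
    (hdeg : ∀ (i : ℕ) (hi : i < w'.length),
      (let g : G := (((w'.take i).map ev).prod);
       let a : A := w'.get ⟨i, hi⟩;
       y g ++ [a] = y (g * ev a) ∨ y g = y (g * ev a) ++ [ι a])) :
    w' = y ((w'.map ev).prod) ∧
      ∀ x : List A, x <+: w' → x = y ((x.map ev).prod) := by
  have key : ∀ i, i ≤ w'.length → w'.take i = y (((w'.take i).map ev).prod) := by
    intro i
    induction i with
    | zero => intro _; simpa using hy1.symm
    | succ i ih =>
      intro hi1
      have hi : i < w'.length := hi1
      have ihi := ih (le_of_lt hi)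
      have htake : w'.take (i+1) = w'.take i ++ [w'.get ⟨i, hi⟩] := by
        rw [List.take_succ, List.getElem?_eq_getElem hi]; rfl
      rcases hdeg i hi with h | h
      · rw [htake]
        have hprod : ((w'.take i ++ [w'.get ⟨i, hi⟩]).map ev).prod
            = ((w'.take i).map ev).prod * ev (w'.get ⟨i, hi⟩) := by
          simp only [List.map_append, List.map_singleton, List.prod_append, List.prod_singleton]
        rw [hprod, ← h, ← ihi]
      · exfalso
        apply hred
        have hdrop : w'.drop i = w'.get ⟨i, hi⟩ :: w'.drop (i+1) := by
          rw [List.drop_eq_getElem_cons hi]; rfl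
        have hw : w' = w'.take i ++ w'.get ⟨i, hi⟩ :: w'.drop (i+1) := by
          conv_lhs => rw [← List.take_append_drop i w', hdrop]
        have hti : w'.take i
            = y (((w'.take i).map ev).prod * ev (w'.get ⟨i, hi⟩)) ++ [ι (w'.get ⟨i, hi⟩)] :=
          ihi.trans h
        refine ⟨y (((w'.take i).map ev).prod * ev (w'.get ⟨i, hi⟩)), ι (w'.get ⟨i, hi⟩),
          w'.drop (i+1), ?_⟩
        rw [hι]
        calc w' = w'.take i ++ w'.get ⟨i, hi⟩ :: w'.drop (i+1) := hw
        _ = (y (((w'.take i).map ev).prod * ev (w'.get ⟨i, hi⟩)) ++ [ι (w'.get ⟨i, hi⟩)])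
              ++ w'.get ⟨i, hi⟩ :: w'.drop (i+1) := by rw [← hti]
        _ = y (((w'.take i).map ev).prod * ev (w'.get ⟨i, hi⟩))
              ++ ι (w'.get ⟨i, hi⟩) :: w'.get ⟨i, hi⟩ :: w'.drop (i+1) := by
          rw [List.append_assoc]; rfl
  constructor
  · have := key w'.length le_rfl
    simpa using this
  · intro x hx
    have hxe : x = w'.take x.length := List.prefix_iff_eq_take.mp hx
    rw [hxe]
    exact key x.length hx.length_le
end
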